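/- arXiv:1601.07413 — 2 statements merged into one kernel-verified Lean document; each statement's English description precedes it below -/
import Mathlib

section
/- Let V be a finite-dimensional ℚ-vector space and v ∈ V ⊗_ℚ ℝ. Write v = Σᵢ aᵢ ⊗ eᵢ for a ℚ-basis (eᵢ) of V with real coefficients aᵢ. Then the dimension of the smallest ℚ-subspace W with v ∈ W ⊗_ℚ ℝ equals the dimension over ℚ of the ℚ-span of the coefficients a₁, …, aₙ in ℝ. -/
open scoped TensorProduct

/-- If `v = Σ aᵢ ⊗ eᵢ` in `V ⊗_ℚ ℝ` (realized as `ℝ ⊗[ℚ] V`) for a ℚ-basis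
`(eᵢ)` of `V`, then the dimension of the smallest ℚ-subspace `W` with
`v ∈ W ⊗_ℚ ℝ` equals `dim_ℚ span_ℚ{a₁,…,aₙ} ⊆ ℝ`. -/
theorem stmt_8 (V : Type*) [AddCommGroup V] [Module ℚ V]
    [FiniteDimensional ℚ V] (n : ℕ) (e : Module.Basis (Fin n) ℚ V)
    (a : Fin n → ℝ) (v : ℝ ⊗[ℚ] V)
    (hv : v = ∑ i : Fin n, a i ⊗ₜ[ℚ] e i) :
    Module.finrank ℚ
        ↥(sInf {W : Submodule ℚ V | v ∈ W.baseChange ℝ})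
      = Module.finrank ℚ ↥(Submodule.span ℚ (Set.range a)) := by
  classical
  set A : Submodule ℚ ℝ := Submodule.span ℚ (Set.range a) with hA
  have hAfin : FiniteDimensional ℚ A :=
    FiniteDimensional.span_of_finite ℚ (Set.finite_range a)
  set m := Module.finrank ℚ A with hm
  let b : Module.Basis (Fin m) ℚ A := Module.finBasis ℚ A
  have haA : ∀ i, a i ∈ A := fun i => Submodule.subset_span ⟨i, rfl⟩
  -- extend coordinate functionals of `b` to all of ℝ
  have hfex : ∀ j : Fin m, ∃ f : ℝ →ₗ[ℚ] ℚ, ∀ x : A, f x = b.repr x j := by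
    intro j
    obtain ⟨g, hg⟩ := LinearMap.exists_extend (b.coord j)
    refine ⟨g, fun x => ?_⟩
    have := congrArg (fun φ => φ x) hg
    simpa [Module.Basis.coord] using this
  choose f hf using hfex
  let c : Fin n → Fin m → ℚ := fun i j => f j (a i)
  have hc : ∀ i j, c i j = b.repr ⟨a i, haA i⟩ j := fun i j => hf j ⟨a i, haA i⟩
  -- the candidate minimal subspace generators
  let w : Fin m → V := fun j => ∑ i, c i j • e i
  -- the coefficient-extraction maps
  let T : Fin m → (ℝ ⊗[ℚ] V →ₗ[ℚ] V) := fun j =>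
    (TensorProduct.lid ℚ V).toLinearMap ∘ₗ TensorProduct.map (f j) LinearMap.id
  have hT : ∀ j (r : ℝ) (x : V), T j (r ⊗ₜ[ℚ] x) = f j r • x := by
    intro j r x; simp [T]
  have hTv : ∀ j, T j v = w j := by
    intro j
    rw [hv, map_sum]
    simp only [hT, w, c]
  -- any W with v in its base change contains all w j
  have hB : ∀ W : Submodule ℚ V, v ∈ W.baseChange ℝ → ∀ j, w j ∈ W := by
    intro W hW j
    rw [← hTv j]
    have key : ∀ u ∈ W.baseChange ℝ, ∀ r : ℝ, T j (r • u) ∈ W := by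
      intro u hu
      rw [Submodule.baseChange_eq_span] at hu
      refine Submodule.span_induction ?_ ?_ ?_ ?_ hu
      · rintro x ⟨y, hy, rfl⟩
        intro r
        have : r • (TensorProduct.mk ℚ ℝ V 1 y) = r ⊗ₜ[ℚ] y := by
          simp [TensorProduct.mk_apply, TensorProduct.smul_tmul']
        rw [this, hT]
        exact W.smul_mem _ hy
      · intro r; simp
      · intro x y _ _ hx hy r
        rw [smul_add, map_add]
        exact W.add_mem (hx r) (hy r)
      · intro s x _ hx r
        rw [smul_smul]
        exact hx (r * s)
    simpa using key v hW 1
  -- express a i in terms of the basis b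
  have hrepr : ∀ i, a i = ∑ j, c i j • (b j : ℝ) := by
    intro i
    have h1 := b.sum_repr ⟨a i, haA i⟩
    have h2 := congrArg (Subtype.val : A → ℝ) h1
    simp only [AddSubmonoidClass.coe_finset_sum, SetLike.val_smul] at h2
    rw [← h2]
    exact Finset.sum_congr rfl fun j _ => by rw [hc]
  -- v = ∑ j, b j ⊗ w j
  have hvb : v = ∑ j, (b j : ℝ) ⊗ₜ[ℚ] w j := by
    rw [hv]
    have : ∀ j : Fin m, (b j : ℝ) ⊗ₜ[ℚ] w j = ∑ i, (c i j • (b j : ℝ)) ⊗ₜ[ℚ] e i := by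
      intro j
      rw [show w j = ∑ i, c i j • e i from rfl, TensorProduct.tmul_sum]
      exact Finset.sum_congr rfl fun i _ => by
        rw [TensorProduct.tmul_smul, TensorProduct.smul_tmul']
    simp only [this]
    rw [Finset.sum_comm]
    refine Finset.sum_congr rfl fun i _ => ?_
    rw [← TensorProduct.sum_tmul, ← hrepr]
  -- w is linearly independent
  have hwli : LinearIndependent ℚ w := by
    rw [Fintype.linearIndependent_iff]
    intro q hq
    have hcoef : ∀ i, ∑ j, q j * c i j = 0 := by
      have hswap : ∑ j, q j • w j = ∑ i, (∑ j, q j * c i j) • e i := by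
        simp only [w, Finset.smul_sum, smul_smul, Finset.sum_smul]
        exact Finset.sum_comm
      have : ∑ i, (∑ j, q j * c i j) • e i = 0 := by rw [← hswap, hq]
      intro i
      exact Fintype.linearIndependent_iff.mp e.linearIndependent _ this i
    intro k
    -- the functional F := ∑ j, q j • f j vanishes on A, but F (b k) = q k
    set F : ℝ →ₗ[ℚ] ℚ := ∑ j, q j • f j with hF
    have hFa : ∀ i, F (a i) = 0 := by
      intro i
      rw [hF]
      simp only [LinearMap.coe_sum, Finset.sum_apply, LinearMap.smul_apply, smul_eq_mul]
      exact hcoef i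
    have hFA : A ≤ LinearMap.ker F := by
      rw [hA, Submodule.span_le]
      rintro x ⟨i, rfl⟩
      exact hFa i
    have hbk : F (b k : ℝ) = q k := by
      rw [hF]
      simp only [LinearMap.coe_sum, Finset.sum_apply, LinearMap.smul_apply, smul_eq_mul]
      have : ∀ j, f j ((b k : A) : ℝ) = b.repr (b k) j := fun j => hf j (b k)
      simp only [this, Module.Basis.repr_self]
      simp [Finsupp.single_apply]
    have : F (b k : ℝ) = 0 := hFA (b k).2
    rw [hbk] at this
    exact this
  -- the minimal subspace is span of w
  set W₀ : Submodule ℚ V := Submodule.span ℚ (Set.range w) with hW₀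
  have h1 : v ∈ W₀.baseChange ℝ := by
    rw [hvb]
    exact Submodule.sum_mem _ fun j _ =>
      Submodule.tmul_mem_baseChange_of_mem _ (Submodule.subset_span ⟨j, rfl⟩)
  have hsInf : sInf {W : Submodule ℚ V | v ∈ W.baseChange ℝ} = W₀ := by
    refine le_antisymm (sInf_le h1) (le_sInf ?_)
    intro W hW
    rw [hW₀, Submodule.span_le]
    rintro x ⟨j, rfl⟩
    exact hB W hW j
  rw [hsInf, hW₀, finrank_span_eq_card hwli, Fintype.card_fin]
end

section
/- For every integer n ≥ 1 and every k with 1 ≤ k ≤ n, and every v ∈ ℝⁿ, and every ε > 0, there exists v' ∈ ℝⁿ with ‖v − v'‖ < ε such that the ℚ-span of the coordinates of v' has dimension exactly k over ℚ. -/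
open Polynomial

/-- Vectors whose coordinates have ℚ-rank exactly `k` are dense in ℝⁿ,
for any `1 ≤ k ≤ n`. -/
theorem stmt_9 (n : ℕ) (hn : 1 ≤ n) (k : ℕ) (hk1 : 1 ≤ k) (hkn : k ≤ n)
    (v : EuclideanSpace ℝ (Fin n)) (ε : ℝ) (hε : 0 < ε) :
    ∃ v' : EuclideanSpace ℝ (Fin n), ‖v - v'‖ < ε ∧
      Module.finrank ℚ ↥(Submodule.span ℚ (Set.range fun i => v' i)) = k := by
  -- the transcendental number
  set x : ℝ := liouvilleNumber 3 with hxdef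
  have hx : Transcendental ℚ x := by
    intro h
    exact transcendental_liouvilleNumber (by norm_num) ((IsFractionRing.isAlgebraic_iff ℤ ℚ ℝ).mpr h)
  -- per-coordinate error bound
  set c : ℝ := ε / (n + 1) with hcdef
  have hc : 0 < c := div_pos hε (by positivity)
  -- rational approximations
  have happrox : ∀ i : Fin n, ∃ q : ℚ,
      |(if (i : ℕ) < k then v i - x ^ (i : ℕ) else v i) - (q : ℝ)| < c / 2 :=
    fun i => exists_rat_near _ (by positivity)
  choose base hbase using happrox
  obtain ⟨r, hr0, hrc⟩ := exists_rat_btwn (show (0 : ℝ) < c / 2 by positivity)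
  have hr0' : (0 : ℚ) < r := by exact_mod_cast hr0
  set q : Fin n → ℚ := fun i => if base i = -1 then base i + r else base i with hqdef
  have hqb : ∀ i : Fin n, |(q i : ℝ) - (base i : ℝ)| ≤ (r : ℝ) := by
    intro i
    by_cases h : base i = -1 <;>
      simp [hqdef, h, abs_of_nonneg, le_of_lt hr0]
  have hq : ∀ i : Fin n,
      |(if (i : ℕ) < k then v i - x ^ (i : ℕ) else v i) - (q i : ℝ)| < c := by
    intro i
    calc |(if (i : ℕ) < k then v i - x ^ (i : ℕ) else v i) - (q i : ℝ)|
        ≤ |(if (i : ℕ) < k then v i - x ^ (i : ℕ) else v i) - (base i : ℝ)|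
          + |(base i : ℝ) - (q i : ℝ)| := abs_sub_le _ _ _
      _ < c / 2 + c / 2 := by
          have h1 := hbase i
          have h2 := hqb i
          rw [abs_sub_comm] at h2
          have := h2.trans_lt hrc
          exact add_lt_add h1 this
      _ = c := by ring
  have hqne : ∀ i : Fin n, q i ≠ -1 := by
    intro i
    by_cases h : base i = -1
    · simp only [hqdef, if_pos h, h]
      intro hcon
      have : r = 0 := by linarith
      exact hr0'.ne' this
    · simpa [hqdef, if_neg h] using h
  -- the perturbed vector
  set v' : EuclideanSpace ℝ (Fin n) :=
    WithLp.toLp 2 (fun i => (q i : ℝ) + (if (i : ℕ) < k then x ^ (i : ℕ) else 0)) with hv'def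
  have hv'app : ∀ i : Fin n,
      v' i = (q i : ℝ) + (if (i : ℕ) < k then x ^ (i : ℕ) else 0) := fun _ => rfl
  refine ⟨v', ?_, ?_⟩
  · -- norm estimate
    have hdiff : ∀ i : Fin n, |v i - v' i| < c := by
      intro i
      by_cases h : (i : ℕ) < k
      · have e : v i - v' i = (v i - x ^ (i : ℕ)) - (q i : ℝ) := by
          rw [hv'app i, if_pos h]; ring
        rw [e]
        simpa [if_pos h] using hq i
      · have e : v i - v' i = v i - (q i : ℝ) := by
          rw [hv'app i, if_neg h]; ring
        rw [e]
        simpa [if_neg h] using hq i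
    have hnorm : ‖v - v'‖ = Real.sqrt (∑ i : Fin n, ‖v i - v' i‖ ^ 2) :=
      EuclideanSpace.norm_eq _
    rw [hnorm]
    have hsum : (∑ i : Fin n, ‖v i - v' i‖ ^ 2) ≤ n * c ^ 2 := by
      calc (∑ i : Fin n, ‖v i - v' i‖ ^ 2) ≤ ∑ _i : Fin n, c ^ 2 := by
            apply Finset.sum_le_sum
            intro i _
            have h1 := hdiff i
            have h2 : ‖v i - v' i‖ = |v i - v' i| := Real.norm_eq_abs _
            nlinarith [abs_nonneg (v i - v' i)]
        _ = n * c ^ 2 := by simp [Finset.sum_const, nsmul_eq_mul]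
    have hlt : (n : ℝ) * c ^ 2 < ε ^ 2 := by
      have key : (n : ℝ) < ((n : ℝ) + 1) ^ 2 := by
        nlinarith [Nat.cast_nonneg (α := ℝ) n]
      have hpos : (0 : ℝ) < ε ^ 2 / ((n : ℝ) + 1) ^ 2 := by positivity
      calc (n : ℝ) * c ^ 2 = (n : ℝ) * (ε ^ 2 / ((n : ℝ) + 1) ^ 2) := by
            rw [hcdef, div_pow]
        _ < ((n : ℝ) + 1) ^ 2 * (ε ^ 2 / ((n : ℝ) + 1) ^ 2) :=
            mul_lt_mul_of_pos_right key hpos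
        _ = ε ^ 2 := by field_simp
    exact (Real.sqrt_lt' hε).mpr (lt_of_le_of_lt hsum hlt)
  · -- rank computation
    have h0n : (0 : ℕ) < n := hn
    have h0k : (0 : ℕ) < k := hk1
    have h1S : (1 : ℝ) ∈ Submodule.span ℚ (Set.range fun j : Fin k => x ^ (j : ℕ)) := by
      have := Submodule.subset_span (R := ℚ) (M := ℝ)
        (s := Set.range fun j : Fin k => x ^ (j : ℕ)) (Set.mem_range_self (⟨0, h0k⟩ : Fin k))
      simpa using this
    have hTS : Submodule.span ℚ (Set.range fun i : Fin n => v' i) ≤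
        Submodule.span ℚ (Set.range fun j : Fin k => x ^ (j : ℕ)) := by
      apply Submodule.span_le.mpr
      rintro _ ⟨i, rfl⟩
      show v' i ∈ Submodule.span ℚ (Set.range fun j : Fin k => x ^ (j : ℕ))
      by_cases h : (i : ℕ) < k
      · have hxi : x ^ (i : ℕ) ∈ Submodule.span ℚ (Set.range fun j : Fin k => x ^ (j : ℕ)) :=
          Submodule.subset_span ⟨⟨(i : ℕ), h⟩, rfl⟩
        have e : v' i = (q i : ℚ) • (1 : ℝ) + x ^ (i : ℕ) := by
          rw [hv'app i, if_pos h, Rat.smul_def]; push_cast; ring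
        rw [e]
        exact Submodule.add_mem _ (Submodule.smul_mem _ _ h1S) hxi
      · have e : v' i = (q i : ℚ) • (1 : ℝ) := by
          rw [hv'app i, if_neg h, Rat.smul_def]; push_cast; ring
        rw [e]
        exact Submodule.smul_mem _ _ h1S
    have h1T : (1 : ℝ) ∈ Submodule.span ℚ (Set.range fun i : Fin n => v' i) := by
      have hv0 : v' (⟨0, h0n⟩ : Fin n) = ((q ⟨0, h0n⟩ + 1 : ℚ) : ℝ) := by
        rw [hv'app]; simp [h0k]
      have hmem : v' (⟨0, h0n⟩ : Fin n) ∈ Submodule.span ℚ (Set.range fun i : Fin n => v' i) :=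
        Submodule.subset_span (Set.mem_range_self _)
      have ha : (q ⟨0, h0n⟩ + 1 : ℚ) ≠ 0 := by
        intro hcon
        exact hqne ⟨0, h0n⟩ (by linarith)
      have h2 := Submodule.smul_mem _ (q ⟨0, h0n⟩ + 1)⁻¹ hmem
      rw [hv0, Rat.smul_def] at h2
      rwa [show ((((q ⟨0, h0n⟩ + 1)⁻¹ : ℚ)) : ℝ) * ((q ⟨0, h0n⟩ + 1 : ℚ) : ℝ) = 1 by
        rw [← Rat.cast_mul, inv_mul_cancel₀ ha, Rat.cast_one]] at h2
    have hST : Submodule.span ℚ (Set.range fun j : Fin k => x ^ (j : ℕ)) ≤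
        Submodule.span ℚ (Set.range fun i : Fin n => v' i) := by
      apply Submodule.span_le.mpr
      rintro _ ⟨j, rfl⟩
      show x ^ (j : ℕ) ∈ Submodule.span ℚ (Set.range fun i : Fin n => v' i)
      have hjn : (j : ℕ) < n := lt_of_lt_of_le j.2 hkn
      have hmem : v' (⟨(j : ℕ), hjn⟩ : Fin n) ∈
          Submodule.span ℚ (Set.range fun i : Fin n => v' i) :=
        Submodule.subset_span (Set.mem_range_self _)
      have heq : x ^ (j : ℕ) = v' (⟨(j : ℕ), hjn⟩ : Fin n) - (q ⟨(j : ℕ), hjn⟩ : ℚ) • (1 : ℝ) := by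
        rw [hv'app, Rat.smul_def]
        simp [j.2]
      rw [heq]
      exact Submodule.sub_mem _ hmem (Submodule.smul_mem _ _ h1T)
    have hTeq : Submodule.span ℚ (Set.range fun i : Fin n => v' i) =
        Submodule.span ℚ (Set.range fun j : Fin k => x ^ (j : ℕ)) := le_antisymm hTS hST
    rw [hTeq]
    -- linear independence of powers of x
    have li : LinearIndependent ℚ fun j : Fin k => (X : ℚ[X]) ^ (j : ℕ) := by
      have h := (Polynomial.basisMonomials ℚ).linearIndependent.comp
        (Fin.val : Fin k → ℕ) Fin.val_injective
      simpa [Function.comp_def, ← Polynomial.X_pow_eq_monomial] using h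
    have lix : LinearIndependent ℚ fun j : Fin k => x ^ (j : ℕ) := by
      have h := li.map' (Polynomial.aeval x).toLinearMap
        (LinearMap.ker_eq_bot.mpr ((transcendental_iff_injective).mp hx))
      simpa [Function.comp_def] using h
    rw [finrank_span_eq_card lix, Fintype.card_fin]
end
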